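/- arXiv:1707.08483 — 2 statements merged into one kernel-verified Lean document; each statement's English description precedes it below -/
import Mathlib

section
/- Let n ≥ 2 be an integer, α > 0, p ∈ {1,…,n−1} coprime to n, and let g be a type (i) coupling satisfying the quantisation condition M ∈ ℤ ∖ {0}. Then for all r ∈ {1,…,n−1} and all complex-valued functions φ, ψ on the lattice ρ_p+sgn(M)Λ⁺_{p,|M|}, one has (Ŝ_{r,M}φ, ψ)_{p,M} = (φ, Ŝ_{n−r,M}ψ)_{p,M}. Consequently, each operator Ĥ_{r,M} = (Ŝ_{r,M} + Ŝ_{n−r,M})/2 is self-adjoint: (Ĥ_{r,M}φ, ψ)_{p,M} = (φ, Ĥ_{r,M}ψ)_{p,M} for all φ, ψ. -/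
noncomputable section
open Real Finset
open scoped Classical

/-- The standard basis vector `e_j` of `ℝⁿ` (1-based index), extended `n`-periodically
(`e_{n+j} = e_j`). -/
def ee (n j : ℕ) : Fin n → ℝ := fun i => if ((i : ℕ) + 1) % n = j % n then 1 else 0

/-- The standard inner product on `ℝⁿ`. -/
def inn {n : ℕ} (x y : Fin n → ℝ) : ℝ := ∑ i, x i * y i

/-- The coordinate `x_j` (1-based index) with the convention `x_{n+k} = x_k - 2π/α`. -/
def coord {n : ℕ} (α : ℝ) (x : Fin n → ℝ) (j : ℕ) : ℝ :=
  if h : 0 < n then x ⟨(j - 1) % n, Nat.mod_lt _ h⟩ - 2 * π / α * (((j - 1) / n : ℕ) : ℝ)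
  else 0

/-- The simple roots `a_{j,p} = e_j - e_{j+p}`. -/
def aa (n p j : ℕ) : Fin n → ℝ := ee n j - ee n (j + p)

/-- The closed simplex `Σ̄_{g,p} = {x ∈ E_n : sgn(M)(x_j - x_{j+p} - g) ≥ 0, j = 1,…,n}`,
where `M = 2πp/α - ng`. -/
def SigmaBar (n p : ℕ) (α g : ℝ) : Set (Fin n → ℝ) :=
  {x | (∑ i, x i) = 0 ∧ ∀ j ∈ Icc 1 n,
    0 ≤ Real.sign (2 * π * p / α - n * g) * (coord α x j - coord α x (j + p) - g)}

/-- The interior `Σ_{g,p}` of the simplex, cut out by the strict inequalities. -/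
def SigmaInt (n p : ℕ) (α g : ℝ) : Set (Fin n → ℝ) :=
  {x | (∑ i, x i) = 0 ∧ ∀ j ∈ Icc 1 n,
    0 < Real.sign (2 * π * p / α - n * g) * (coord α x j - coord α x (j + p) - g)}

/-- `g` is a type (i) coupling, with `q ∈ {1,…,n-1}` the multiplicative inverse of `p` mod `n`. -/
def TypeI (n p q : ℕ) (α g : ℝ) : Prop :=
  1 ≤ q ∧ q ≤ n - 1 ∧ (p * q) % n = 1 % n ∧
  ((2 * π / α * ((p : ℝ) / n - 1 / ((n : ℝ) * q)) < g ∧ g < 2 * π / α * ((p : ℝ) / n)) ∨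
   (2 * π / α * ((p : ℝ) / n) < g ∧
      g < 2 * π / α * ((p : ℝ) / n + 1 / ((n : ℝ) * ((n : ℝ) - q)))))

/-- `ρ_p = g(ω_{1,p}+…+ω_{n-p,p}) + (g - 2π/α)(ω_{n-p+1,p}+…+ω_{n-1,p})`. -/
def rhoP (n p : ℕ) (α g : ℝ) (ω : ℕ → Fin n → ℝ) : Fin n → ℝ :=
  g • (∑ j ∈ Icc 1 (n - p), ω j) + (g - 2 * π / α) • (∑ j ∈ Icc (n - p + 1) (n - 1), ω j)

/-- `Λ⁺_{p,|M|}`: nonnegative integral combinations of the `ω_{j,p}` with coefficient sum `≤ |M|`. -/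
def Lam (n : ℕ) (Mabs : ℝ) (ω : ℕ → Fin n → ℝ) : Set (Fin n → ℝ) :=
  {μ | ∃ m : ℕ → ℕ, (∑ j ∈ Icc 1 (n - 1), (m j : ℝ)) ≤ Mabs ∧
    μ = ∑ j ∈ Icc 1 (n - 1), (m j : ℝ) • ω j}

/-- The fundamental weight `ω_r = e_1+…+e_r - (r/n)(e_1+…+e_n)`. -/
def omegaStd (n r : ℕ) : Fin n → ℝ :=
  fun i => (if (i : ℕ) + 1 ≤ r then 1 else 0) - (r : ℝ) / n

/-- Membership in the orbit `S_n(ω_r)` of `ω_r` under coordinate permutations. -/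
def inOrbit (n r : ℕ) (ν : Fin n → ℝ) : Prop :=
  ∃ σ : Equiv.Perm (Fin n), ν = fun i => omegaStd n r (σ i)

/-- The orbit `S_n(ω_r)` as a finite set. -/
def orbitF (n r : ℕ) : Finset (Fin n → ℝ) :=
  Finset.image (fun σ : Equiv.Perm (Fin n) => fun i => omegaStd n r (σ i)) Finset.univ

/-- `V_ν(g;x) = ∏_{a ∈ A_{n-1}, ⟨a,ν⟩=1} sin(α(⟨a,x⟩+g)/2)/sin(α⟨a,x⟩/2)`. -/
def Vnu (n : ℕ) (α g : ℝ) (ν x : Fin n → ℝ) : ℝ :=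
  ∏ j ∈ Icc 1 n, ∏ k ∈ Icc 1 n,
    if j ≠ k ∧ inn (ee n j - ee n k) ν = 1 then
      Real.sin (α * (inn (ee n j - ee n k) x + g) / 2) /
        Real.sin (α * inn (ee n j - ee n k) x / 2)
    else 1

/-- `V_J(g;x) = ∏_{j∈J, k∉J} sin(α(x_j-x_k+g)/2)/sin(α(x_j-x_k)/2)`. -/
def VJ (n : ℕ) (α g : ℝ) (J : Finset ℕ) (x : Fin n → ℝ) : ℝ :=
  ∏ j ∈ J, ∏ k ∈ Icc 1 n \ J,
    Real.sin (α * (coord α x j - coord α x k + g) / 2) /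
      Real.sin (α * (coord α x j - coord α x k) / 2)

/-- `F_J(g;x) = ∏_{j,k∈J, j≠k} sin(α(x_j-x_k)/2)/sin(α(x_j-x_k+g)/2)`. -/
def FJ (n : ℕ) (α g : ℝ) (J : Finset ℕ) (x : Fin n → ℝ) : ℝ :=
  ∏ j ∈ J, ∏ k ∈ J,
    if j ≠ k then
      Real.sin (α * (coord α x j - coord α x k) / 2) /
        Real.sin (α * (coord α x j - coord α x k + g) / 2)
    else 1

/-- The trigonometric Pochhammer symbol `(z : sin_α)_m`. -/
def poch (α z : ℝ) (m : ℤ) : ℝ :=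
  if 0 ≤ m then ∏ l ∈ Finset.range m.toNat, Real.sin (α * (z + l) / 2)
  else 1 / ∏ l ∈ Finset.Icc 1 (-m).toNat, Real.sin (α * (z - l) / 2)

/-- Membership in the set of positive roots `A⁺_{n-1,p}`. -/
def inPosRoots (n p : ℕ) (v : Fin n → ℝ) : Prop :=
  (∃ j ∈ Icc 1 n, ∃ k ∈ Icc 1 n, j ≠ k ∧ v = ee n j - ee n k) ∧
  ∃ c : ℕ → ℕ, v = ∑ j ∈ Icc 1 (n - 1), (c j : ℝ) • aa n p j

/-- The lattice function `Δ_p(μ)`. -/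
def Delta (n p : ℕ) (α g : ℝ) (ω : ℕ → Fin n → ℝ) (μ : Fin n → ℝ) : ℝ :=
  ∏ j ∈ Icc 1 n, ∏ k ∈ Icc 1 n,
    if inPosRoots n p (ee n j - ee n k) then
      Real.sin (α * inn (ee n j - ee n k)
          (rhoP n p α g ω + Real.sign (2 * π * p / α - n * g) • μ) / 2) /
        Real.sin (α * inn (ee n j - ee n k) (rhoP n p α g ω) / 2) *
      (poch α (inn (ee n j - ee n k) (rhoP n p α g ω) +
            Real.sign (2 * π * p / α - n * g) * g)
          ⌊Real.sign (2 * π * p / α - n * g) * inn (ee n j - ee n k) μ⌋ /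
        poch α (inn (ee n j - ee n k) (rhoP n p α g ω) + 1 -
            Real.sign (2 * π * p / α - n * g) * g)
          ⌊Real.sign (2 * π * p / α - n * g) * inn (ee n j - ee n k) μ⌋)
    else 1

/-- The coefficient `W_ν(ρ_p + sgn(M)μ)` (equal to `0` when `μ + ν ∉ Λ⁺_{p,|M|}`). -/
def Wmu (n p : ℕ) (α g : ℝ) (ω : ℕ → Fin n → ℝ) (s : (Fin n → ℝ) → ℝ)
    (μ ν : Fin n → ℝ) : ℝ :=
  if μ + ν ∈ Lam n |2 * π * p / α - n * g| ω then
    s ν * Real.sqrt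
      (Vnu n α g ν (rhoP n p α g ω + Real.sign (2 * π * p / α - n * g) • μ) *
       Vnu n α g ν (-(rhoP n p α g ω) - Real.sign (2 * π * p / α - n * g) • (μ + ν)))
  else 0

/-- The discrete difference operator `Ŝ_{r,M}` acting on lattice functions. -/
def SOp (n p r : ℕ) (α g : ℝ) (ω : ℕ → Fin n → ℝ) (s : (Fin n → ℝ) → ℝ)
    (φ : (Fin n → ℝ) → ℂ) : (Fin n → ℝ) → ℂ :=
  fun x => ∑ ν ∈ orbitF n r,
    (Wmu n p α g ω s (Real.sign (2 * π * p / α - n * g) • (x - rhoP n p α g ω)) ν : ℂ) *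
      φ (x + Real.sign (2 * π * p / α - n * g) • ν)

/-- The inner product `(φ, ψ)_{p,M}` on lattice functions. -/
def ip (n p : ℕ) (α g : ℝ) (ω : ℕ → Fin n → ℝ) (φ ψ : (Fin n → ℝ) → ℂ) : ℂ :=
  ∑ᶠ μ ∈ Lam n |2 * π * p / α - n * g| ω,
    φ (rhoP n p α g ω + Real.sign (2 * π * p / α - n * g) • μ) *
      starRingEnd ℂ (ψ (rhoP n p α g ω + Real.sign (2 * π * p / α - n * g) • μ))

/-- The elementary symmetric function `ℰ_r(u) = Σ_{ν ∈ S_n(ω_r)} exp(iα⟨ν,u⟩)`. -/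
def calE (n r : ℕ) (α : ℝ) (u : Fin n → ℝ) : ℂ :=
  ∑ ν ∈ orbitF n r, Complex.exp (Complex.I * (α : ℂ) * (inn ν u : ℂ))

lemma inn_sub_left {n : ℕ} (x y z : Fin n → ℝ) : inn (x - y) z = inn x z - inn y z := by
  simp [inn, sub_mul, Finset.sum_sub_distrib]

lemma inn_neg_right {n : ℕ} (x z : Fin n → ℝ) : inn x (-z) = - inn x z := by
  simp [inn, mul_neg, Finset.sum_neg_distrib]

lemma inn_swap_neg {n : ℕ} (x y z : Fin n → ℝ) : inn (x - y) (-z) = inn (y - x) z := by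
  rw [inn_neg_right, inn_sub_left, inn_sub_left]; ring

lemma inn_ee {n : ℕ} (j : ℕ) (hj1 : 1 ≤ j) (hjn : j ≤ n) (y : Fin n → ℝ) :
    inn (ee n j) y = y ⟨j - 1, by omega⟩ := by
  have hcond : ∀ i : Fin n, ((((i:ℕ) + 1) % n = j % n) ↔ (i : ℕ) = j - 1) := by
    intro i
    have hi := i.isLt
    rcases Nat.lt_or_ge ((i:ℕ)+1) n with h1 | h1
    · rw [Nat.mod_eq_of_lt h1]
      rcases Nat.lt_or_ge j n with h2 | h2
      · rw [Nat.mod_eq_of_lt h2]; omega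
      · have hj : j = n := by omega
        subst hj; rw [Nat.mod_self]; omega
    · have h1' : (i:ℕ) + 1 = n := by omega
      rw [h1', Nat.mod_self]
      rcases Nat.lt_or_ge j n with h2 | h2
      · rw [Nat.mod_eq_of_lt h2]; omega
      · have hj : j = n := by omega
        subst hj; rw [Nat.mod_self]; omega
  rw [inn, Finset.sum_eq_single (⟨j - 1, by omega⟩ : Fin n)]
  · simp only [ee]
    rw [if_pos ((hcond ⟨j - 1, by omega⟩).mpr rfl), one_mul]
  · intro b _ hb
    simp only [ee]
    rw [if_neg, zero_mul]
    intro hcon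
    exact hb (Fin.ext ((hcond b).mp hcon))
  · intro h
    exact absurd (Finset.mem_univ _) h

lemma inn_ee_sub {n : ℕ} (j k : ℕ) (hj : j ∈ Icc 1 n) (hk : k ∈ Icc 1 n) (y : Fin n → ℝ) :
    inn (ee n j - ee n k) y = y ⟨j - 1, by have := (Finset.mem_Icc.mp hj); omega⟩ -
      y ⟨k - 1, by have := (Finset.mem_Icc.mp hk); omega⟩ := by
  rw [inn_sub_left, inn_ee j (Finset.mem_Icc.mp hj).1 (Finset.mem_Icc.mp hj).2,
    inn_ee k (Finset.mem_Icc.mp hk).1 (Finset.mem_Icc.mp hk).2]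

lemma Vnu_neg (n : ℕ) (α g : ℝ) (ν x : Fin n → ℝ) :
    Vnu n α g (-ν) x = Vnu n α g ν (-x) := by
  rw [Vnu, Vnu, Finset.prod_comm]
  refine Finset.prod_congr rfl (fun j _ => Finset.prod_congr rfl (fun k _ => ?_))
  have h1 : inn (ee n k - ee n j) (-ν) = inn (ee n j - ee n k) ν := inn_swap_neg _ _ _
  have h2 : inn (ee n j - ee n k) (-x) = inn (ee n k - ee n j) x := by
    rw [inn_swap_neg]
  rw [h2]
  refine if_congr ?_ rfl rfl
  constructor
  · rintro ⟨hne, hv⟩; exact ⟨hne.symm, by rw [← h1]; exact hv⟩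
  · rintro ⟨hne, hv⟩; exact ⟨hne.symm, by rw [h1]; exact hv⟩

lemma omegaStd_neg {n r : ℕ} (hr1 : 1 ≤ r) (hrn : r ≤ n - 1) (hn : 2 ≤ n) (i : Fin n) :
    -omegaStd n r i = omegaStd n (n - r) (Fin.revPerm i) := by
  have hi := i.isLt
  have hrev : ((Fin.revPerm i : Fin n) : ℕ) = n - 1 - (i : ℕ) := by
    rw [Fin.revPerm_apply, Fin.val_rev]; omega
  simp only [omegaStd, hrev]
  have hcast : ((n - r : ℕ) : ℝ) = (n : ℝ) - r := by
    have : r ≤ n := by omega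
    push_cast [Nat.cast_sub this]; ring
  rw [hcast]
  by_cases h : (i : ℕ) + 1 ≤ r
  · rw [if_pos h, if_neg (by omega)]
    have hn0 : (n : ℝ) ≠ 0 := by positivity
    field_simp
    ring
  · rw [if_neg h, if_pos (by omega)]
    have hn0 : (n : ℝ) ≠ 0 := by positivity
    field_simp
    ring

lemma neg_mem_orbitF {n r : ℕ} (hr1 : 1 ≤ r) (hrn : r ≤ n - 1) (hn : 2 ≤ n)
    {ν : Fin n → ℝ} (hν : ν ∈ orbitF n r) : -ν ∈ orbitF n (n - r) := by
  rw [orbitF, Finset.mem_image] at hν ⊢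
  obtain ⟨σ, _, rfl⟩ := hν
  exact ⟨σ.trans Fin.revPerm, Finset.mem_univ _, by
    funext i
    simp only [Pi.neg_apply, Equiv.trans_apply]
    exact (omegaStd_neg hr1 hrn hn (σ i)).symm⟩

lemma prod_pos_of_involution {ι : Type*} [DecidableEq ι] (F : ι → ℝ) (σ : ι → ι)
    (hσσ : ∀ d, σ (σ d) = d) (hF : ∀ d, F (σ d) = F d) :
    ∀ s : Finset ι, (∀ d ∈ s, σ d ∈ s) → (∀ d ∈ s, F d ≠ 0) →
      (∀ d ∈ s, σ d = d → 0 < F d) → 0 < ∏ d ∈ s, F d := by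
  intro s
  induction s using Finset.strongInduction with
  | _ s ih =>
    intro hmem hne hfix
    rcases Finset.eq_empty_or_nonempty s with rfl | ⟨a, ha⟩
    · simp
    by_cases hfa : σ a = a
    · have h1 : s = insert a (s.erase a) := (Finset.insert_erase ha).symm
      rw [h1, Finset.prod_insert (Finset.notMem_erase _ _)]
      have hpos := hfix a ha hfa
      have hrec : 0 < ∏ d ∈ s.erase a, F d := by
        apply ih _ (Finset.erase_ssubset ha)
        · intro d hd
          rw [Finset.mem_erase] at hd ⊢
          refine ⟨?_, hmem d hd.2⟩
          intro hc; exact hd.1 (by rw [← hσσ d, hc, hfa])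
        · exact fun d hd => hne d (Finset.mem_erase.mp hd).2
        · exact fun d hd h => hfix d (Finset.mem_erase.mp hd).2 h
      positivity
    · set t := (s.erase a).erase (σ a) with ht
      have hσa : σ a ∈ s := hmem a ha
      have hσa' : σ a ∈ s.erase a := Finset.mem_erase.mpr ⟨fun h => hfa h, hσa⟩
      have h1 : s = insert a (insert (σ a) t) := by
        rw [ht, Finset.insert_erase hσa', Finset.insert_erase ha]
      have hat : a ∉ insert (σ a) t := by
        simp only [Finset.mem_insert, ht, Finset.mem_erase]
        push_neg
        exact ⟨fun h => hfa h.symm, fun _ h => absurd rfl h⟩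
      rw [h1, Finset.prod_insert hat, Finset.prod_insert (Finset.notMem_erase _ _)]
      have hsq : 0 < F a * F (σ a) := by
        rw [hF a]
        exact mul_self_pos.mpr (hne a ha)
      have hrec : 0 < ∏ d ∈ t, F d := by
        apply ih
        · apply Finset.ssubset_of_ssubset_of_subset (Finset.erase_ssubset hσa')
          exact Finset.erase_subset _ _
        · intro d hd
          rw [ht, Finset.mem_erase, Finset.mem_erase] at hd ⊢
          refine ⟨?_, ?_, hmem d hd.2.2⟩
          · intro hc
            apply hd.2.1
            have := congrArg σ hc
            rw [hσσ d, hσσ a] at this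
            exact this
          · intro hc
            apply hd.1
            have := congrArg σ hc
            rw [hσσ d] at this
            exact this
        · exact fun d hd => hne d (Finset.mem_erase.mp (Finset.mem_erase.mp hd).2).2
        · exact fun d hd h => hfix d (Finset.mem_erase.mp (Finset.mem_erase.mp hd).2).2 h
      calc (0:ℝ) < F a * F (σ a) * ∏ d ∈ t, F d := by positivity
      _ = F a * (F (σ a) * ∏ d ∈ t, F d) := by ring

lemma count_shift {n : ℕ} [NeZero n] (P : ZMod n → Prop) [DecidablePred P] (d : ZMod n) :
    (Finset.univ.filter fun a : ZMod n => P a ∧ ¬P (a + d)).card =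
    (Finset.univ.filter fun a : ZMod n => P a ∧ ¬P (a + (-d))).card := by
  have key : ∀ e : ZMod n,
      (Finset.univ.filter fun a : ZMod n => P a ∧ ¬P (a + e)).card
      + (Finset.univ.filter fun a : ZMod n => P a ∧ P (a + e)).card
      = (Finset.univ.filter P).card := by
    intro e
    have h0 := Finset.card_filter_add_card_filter_not
      (s := Finset.univ.filter P) (p := fun a : ZMod n => P (a + e))
    have e1 : (Finset.univ.filter fun a : ZMod n => P a ∧ P (a + e)) =
        (Finset.univ.filter P).filter (fun a : ZMod n => P (a + e)) := by
      rw [Finset.filter_filter]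
    have e2 : (Finset.univ.filter fun a : ZMod n => P a ∧ ¬P (a + e)) =
        (Finset.univ.filter P).filter (fun a : ZMod n => ¬P (a + e)) := by
      rw [Finset.filter_filter]
    rw [e1, e2]
    omega
  have keq : (Finset.univ.filter fun a : ZMod n => P a ∧ P (a + d)).card
      = (Finset.univ.filter fun a : ZMod n => P a ∧ P (a + (-d))).card := by
    apply Finset.card_nbij' (fun a => a + d) (fun b => b + (-d))
    · intro a ha
      simp only [Finset.mem_coe, Finset.mem_filter, Finset.mem_univ, true_and] at ha ⊢
      refine ⟨ha.2, by rw [add_neg_cancel_right]; exact ha.1⟩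
    · intro b hb
      simp only [Finset.mem_coe, Finset.mem_filter, Finset.mem_univ, true_and] at hb ⊢
      refine ⟨hb.2, by rw [neg_add_cancel_right]; exact hb.1⟩
    · intro a _; exact add_neg_cancel_right a d
    · intro b _; exact neg_add_cancel_right b d
  have h1 := key d
  have h2 := key (-d)
  omega

def xx0 (n : ℕ) (α : ℝ) : Fin n → ℝ :=
  fun i => π / (n * α) * ((n : ℝ) + 1 - 2 * ((i : ℕ) + 1))

lemma trig_id (u θ : ℝ) : Real.sin (u + θ) * Real.sin (u - θ) =
    Real.sin u ^ 2 - Real.sin θ ^ 2 := by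
  rw [Real.sin_add, Real.sin_sub]
  have h1 := Real.sin_sq_add_cos_sq u
  have h2 := Real.sin_sq_add_cos_sq θ
  nlinarith [h1, h2]

lemma xx0_sum (n : ℕ) (α : ℝ) : (∑ i, xx0 n α i) = 0 := by
  simp only [xx0]
  rw [← Finset.mul_sum]
  rcases Nat.eq_zero_or_pos n with rfl | hn
  · simp
  apply mul_eq_zero_of_right
  have h1 : (∑ i : Fin n, ((n:ℝ) + 1 - 2 * ((i:ℕ) + 1))) =
      (n:ℝ) * ((n:ℝ)+1) - 2 * (∑ i : Fin n, ((i:ℕ):ℝ)) - 2 * n := by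
    rw [Finset.sum_sub_distrib]
    simp [Finset.sum_add_distrib, Finset.mul_sum, mul_add]
    ring
  rw [h1]
  have h2 : (∑ i : Fin n, ((i:ℕ):ℝ)) = (n:ℝ) * ((n:ℝ) - 1) / 2 := by
    rw [Fin.sum_univ_eq_sum_range (fun i => ((i:ℕ):ℝ))]
    have := Finset.sum_range_id_mul_two n
    have hcast : ((∑ i ∈ Finset.range n, i : ℕ) : ℝ) * 2 = ((n:ℝ) - 1) * n := by
      rw [← Nat.cast_ofNat, ← Nat.cast_mul, this]
      push_cast [Nat.cast_sub hn]
      ring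
    push_cast at hcast ⊢
    linarith [hcast]
  rw [h2]
  ring

lemma xx0_coord {n : ℕ} {α : ℝ} (hn : 0 < n) (hα : α ≠ 0) (m : ℕ) (hm1 : 1 ≤ m)
    (hm2 : m ≤ 2 * n) :
    coord α (xx0 n α) m = π / (n * α) * ((n : ℝ) + 1 - 2 * m) := by
  rw [coord, dif_pos hn]
  rcases Nat.lt_or_ge (m - 1) n with h | h
  · have hmod : (m - 1) % n = m - 1 := Nat.mod_eq_of_lt h
    have hdiv : (m - 1) / n = 0 := Nat.div_eq_of_lt h
    simp only [xx0, hmod, hdiv]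
    push_cast [Nat.cast_sub hm1]
    ring
  · have hmod : (m - 1) % n = m - 1 - n := by
      rw [Nat.mod_eq_sub_mod h, Nat.mod_eq_of_lt (by omega)]
    have hdiv : (m - 1) / n = 1 := by
      apply Nat.div_eq_of_lt_le <;> omega
    simp only [xx0, hmod, hdiv]
    have hn0 : (n : ℝ) ≠ 0 := Nat.cast_ne_zero.mpr (by omega)
    push_cast [Nat.cast_sub (by omega : n ≤ m - 1), Nat.cast_sub hm1]
    field_simp
    ring

lemma xx0_mem {n p : ℕ} {α g : ℝ} (hn : 0 < n) (hα : 0 < α) (hpn : p ≤ n - 1)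
    {Mz : ℤ} (hMz : 2 * π * p / α - n * g = (Mz : ℝ)) (hMz0 : Mz ≠ 0) :
    xx0 n α ∈ SigmaInt n p α g := by
  constructor
  · exact xx0_sum n α
  · intro j hj
    rw [Finset.mem_Icc] at hj
    have hj1 := hj.1
    have hj2 := hj.2
    rw [xx0_coord hn (ne_of_gt hα) j hj1 (by omega),
      xx0_coord hn (ne_of_gt hα) (j + p) (by omega) (by omega)]
    have hn0 : (n : ℝ) ≠ 0 := Nat.cast_ne_zero.mpr (by omega)
    have hkey : π / (n * α) * ((n : ℝ) + 1 - 2 * j) -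
        π / (n * α) * ((n : ℝ) + 1 - 2 * (j + p : ℕ)) - g = (Mz : ℝ) / n := by
      rw [← hMz]
      push_cast
      field_simp
      ring
    rw [hkey, hMz]
    rcases lt_or_gt_of_ne (fun h => hMz0 (by exact_mod_cast h) : (Mz:ℝ) ≠ 0) with h | h
    · rw [Real.sign_of_neg h]
      have : (Mz : ℝ) / n < 0 := div_neg_of_neg_of_pos h (by positivity)
      linarith
    · rw [Real.sign_of_pos h]
      have : 0 < (Mz : ℝ) / n := div_pos h (by positivity)
      linarith

lemma theta_bounds {n p q : ℕ} {α g : ℝ} (hn : 2 ≤ n) (hα : 0 < α)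
    (hp1 : 1 ≤ p) (hpn : p ≤ n - 1) (htype : TypeI n p q α g) :
    ((p : ℝ) - 1) * π < n * (α * g / 2) ∧ n * (α * g / 2) < ((p : ℝ) + 1) * π ∧
      n * (α * g / 2) ≠ p * π := by
  obtain ⟨hq1, hqn, _, hbr⟩ := htype
  have hπ := Real.pi_pos
  have hn0 : (0:ℝ) < n := by positivity
  have hq0 : (0:ℝ) < q := by exact_mod_cast hq1
  have hq1' : (1:ℝ) ≤ q := by exact_mod_cast hq1
  have hnq : (1:ℝ) ≤ (n:ℝ) - q := by
    have : q + 1 ≤ n := by omega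
    have := (Nat.cast_le (α := ℝ)).mpr this
    push_cast at this
    linarith
  rcases hbr with ⟨hlo, hhi⟩ | ⟨hlo, hhi⟩
  · have h1 : n * (α * g / 2) < (p:ℝ) * π := by
      have := mul_lt_mul_of_pos_left hhi (by positivity : (0:ℝ) < n * α / 2)
      calc n * (α * g / 2) = n * α / 2 * g := by ring
      _ < n * α / 2 * (2 * π / α * ((p : ℝ) / n)) := this
      _ = (p:ℝ) * π := by field_simp
    have h2 : ((p:ℝ) - 1) * π < n * (α * g / 2) := by
      have := mul_lt_mul_of_pos_left hlo (by positivity : (0:ℝ) < n * α / 2)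
      have e1 : n * α / 2 * (2 * π / α * ((p : ℝ) / n - 1 / ((n:ℝ) * q)))
          = ((p:ℝ) - 1 / q) * π := by field_simp
      have e2 : ((p:ℝ) - 1) * π ≤ ((p:ℝ) - 1/q) * π := by
        have : 1 / (q:ℝ) ≤ 1 := by rw [div_le_one hq0]; exact hq1'
        nlinarith
      calc ((p:ℝ) - 1) * π ≤ ((p:ℝ) - 1/q) * π := e2
      _ = n * α / 2 * (2 * π / α * ((p : ℝ) / n - 1 / ((n:ℝ) * q))) := e1.symm
      _ < n * α / 2 * g := this
      _ = n * (α * g / 2) := by ring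
    exact ⟨h2, by linarith, ne_of_lt h1⟩
  · have h1 : (p:ℝ) * π < n * (α * g / 2) := by
      have := mul_lt_mul_of_pos_left hlo (by positivity : (0:ℝ) < n * α / 2)
      calc (p:ℝ) * π = n * α / 2 * (2 * π / α * ((p : ℝ) / n)) := by field_simp
      _ < n * α / 2 * g := this
      _ = n * (α * g / 2) := by ring
    have h2 : n * (α * g / 2) < ((p:ℝ) + 1) * π := by
      have := mul_lt_mul_of_pos_left hhi (by positivity : (0:ℝ) < n * α / 2)
      have hnq0 : (n:ℝ) - q ≠ 0 := by linarith
      have e1 : n * α / 2 * (2 * π / α * ((p : ℝ) / n + 1 / ((n:ℝ) * ((n:ℝ) - q))))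
          = ((p:ℝ) + 1 / ((n:ℝ) - q)) * π := by field_simp
      have e2 : ((p:ℝ) + 1/((n:ℝ) - q)) * π ≤ ((p:ℝ) + 1) * π := by
        have : 1 / ((n:ℝ) - q) ≤ 1 := by rw [div_le_one (by linarith)]; linarith
        nlinarith
      calc n * (α * g / 2) = n * α / 2 * g := by ring
      _ < n * α / 2 * (2 * π / α * ((p : ℝ) / n + 1 / ((n:ℝ) * ((n:ℝ) - q)))) := this
      _ = ((p:ℝ) + 1 / ((n:ℝ) - q)) * π := e1
      _ ≤ ((p:ℝ) + 1) * π := e2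
    exact ⟨by linarith, h2, (ne_of_gt h1)⟩

lemma theta_ne {n p q : ℕ} {α g : ℝ} (hn : 2 ≤ n) (hα : 0 < α)
    (hp1 : 1 ≤ p) (hpn : p ≤ n - 1) (htype : TypeI n p q α g)
    (c : ℕ) (hc1 : 1 ≤ c) (hc2 : c ≤ n - 1) :
    Real.sin (π * c / n - α * g / 2) ≠ 0 ∧ Real.sin (π * c / n + α * g / 2) ≠ 0 := by
  obtain ⟨hb1, hb2, hb3⟩ := theta_bounds hn hα hp1 hpn htype
  have hπ := Real.pi_pos
  have hn0 : (0:ℝ) < n := by positivity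
  constructor
  · intro hsin
    rw [Real.sin_eq_zero_iff] at hsin
    obtain ⟨z, hz⟩ := hsin
    have hval : n * (α * g / 2) = ((c : ℝ) - n * z) * π := by
      have : α * g / 2 = π * c / n - z * π := by linarith
      rw [this]
      field_simp
    have hw : ((c : ℤ) - n * z : ℤ) = p := by
      have e1 : ((p:ℝ) - 1) * π < ((c:ℝ) - n*z) * π := by rw [← hval]; exact hb1
      have e2 : ((c:ℝ) - n*z) * π < ((p:ℝ) + 1) * π := by rw [← hval]; exact hb2
      have f1 : (p:ℝ) - 1 < (c:ℝ) - n*z := lt_of_mul_lt_mul_right (by linarith) (le_of_lt hπ)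
      have f2 : (c:ℝ) - n*z < (p:ℝ) + 1 := lt_of_mul_lt_mul_right (by linarith) (le_of_lt hπ)
      have g1 : ((p:ℤ) - 1 : ℤ) < (c : ℤ) - n * z := by exact_mod_cast f1
      have g2 : ((c:ℤ) - n * z : ℤ) < (p:ℤ) + 1 := by exact_mod_cast f2
      omega
    apply hb3
    rw [hval]
    have : ((c:ℝ) - n * z) = (p:ℝ) := by exact_mod_cast hw
    rw [this]
  · intro hsin
    rw [Real.sin_eq_zero_iff] at hsin
    obtain ⟨z, hz⟩ := hsin
    have hval : n * (α * g / 2) = ((n:ℝ) * z - c) * π := by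
      have : α * g / 2 = z * π - π * c / n := by linarith
      rw [this]
      field_simp
    have hw : ((n : ℤ) * z - c : ℤ) = p := by
      have e1 : ((p:ℝ) - 1) * π < ((n:ℝ)*z - c) * π := by rw [← hval]; exact hb1
      have e2 : ((n:ℝ)*z - c) * π < ((p:ℝ) + 1) * π := by rw [← hval]; exact hb2
      have f1 : (p:ℝ) - 1 < (n:ℝ)*z - c := lt_of_mul_lt_mul_right (by linarith) (le_of_lt hπ)
      have f2 : (n:ℝ)*z - c < (p:ℝ) + 1 := lt_of_mul_lt_mul_right (by linarith) (le_of_lt hπ)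
      have g1 : ((p:ℤ) - 1 : ℤ) < (n : ℤ) * z - c := by exact_mod_cast f1
      have g2 : ((n:ℤ) * z - c : ℤ) < (p:ℤ) + 1 := by exact_mod_cast f2
      omega
    apply hb3
    rw [hval]
    have : ((n:ℝ) * z - c) = (p:ℝ) := by exact_mod_cast hw
    rw [this]

lemma AB_formula (v t : ℝ) :
    Real.sin (v + t) / Real.sin v * (Real.sin (-v + t) / Real.sin (-v)) =
      (Real.sin v ^ 2 - Real.sin t ^ 2) / Real.sin v ^ 2 := by
  rw [Real.sin_neg, div_mul_div_comm]
  have h1 : Real.sin (-v + t) = -Real.sin (v - t) := by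
    rw [← Real.sin_neg]; ring_nf
  rw [h1]
  have h2 : Real.sin (v + t) * -Real.sin (v - t) = -(Real.sin v ^ 2 - Real.sin t ^ 2) := by
    have := trig_id v t
    nlinarith [this]
  have h3 : Real.sin v * -Real.sin v = -(Real.sin v ^ 2) := by ring
  rw [h2, h3, neg_div_neg_eq]

lemma sin_sq_shift (x : ℝ) (m : ℤ) : Real.sin (x + m * π) ^ 2 = Real.sin x ^ 2 := by
  rw [Real.sin_add_int_mul_pi]
  rcases Int.even_or_odd m with h | h
  · rw [Even.neg_one_zpow h]; ring
  · rw [Odd.neg_one_zpow h]; ring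

section Vpos

variable {n p q r : ℕ} {α g : ℝ}

lemma Vnu_mul_pos (hn : 2 ≤ n) (hα : 0 < α) (hp1 : 1 ≤ p) (hpn : p ≤ n - 1)
    (htype : TypeI n p q α g) {ν : Fin n → ℝ} (hν : ν ∈ orbitF n r) :
    0 < Vnu n α g ν (xx0 n α) * Vnu n α g ν (-(xx0 n α)) := by
  haveI : NeZero n := ⟨by omega⟩
  have hπ := Real.pi_pos
  have hn0 : (0:ℝ) < n := by positivity
  rw [orbitF, Finset.mem_image] at hν
  obtain ⟨σ, -, rfl⟩ := hν
  set ν : Fin n → ℝ := fun i => omegaStd n r (σ i) with hνdef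
  -- the indicator predicate on ZMod n
  set PJ : ZMod n → Prop := fun z => ν ⟨(z - 1).val, ZMod.val_lt _⟩ = 1 - (r:ℝ)/n with hPJdef
  set Hz : ZMod n → ℝ := fun d =>
    (Real.sin (π * d.val / n) ^ 2 - Real.sin (α * g / 2) ^ 2) /
      Real.sin (π * d.val / n) ^ 2 with hHzdef
  set cnt : ZMod n → ℕ := fun d =>
    ((Finset.univ.filter fun a : ZMod n => PJ a ∧ ¬PJ (a + d)).card) with hcntdef
  -- value bridging
  have hval1 : ∀ j : ℕ, 1 ≤ j → j ≤ n → (((j:ℕ) : ZMod n) - 1).val = j - 1 := by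
    intro j h1 h2
    have e : ((j:ℕ) : ZMod n) - 1 = ((j - 1 : ℕ) : ZMod n) := by
      rw [Nat.cast_sub h1]; push_cast; ring
    rw [e, ZMod.val_natCast, Nat.mod_eq_of_lt (by omega)]
  have hvals : ∀ i : Fin n, ν i = 1 - (r:ℝ)/n ∨ ν i = -((r:ℝ)/n) := by
    intro i
    simp only [hνdef, omegaStd]
    by_cases h : (σ i : ℕ) + 1 ≤ r
    · left; rw [if_pos h]
    · right; rw [if_neg h]; ring
  have hPJ : ∀ j : ℕ, ∀ (h1 : 1 ≤ j) (h2 : j ≤ n),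
      (PJ ((j:ℕ) : ZMod n) ↔ ν ⟨j - 1, by omega⟩ = 1 - (r:ℝ)/n) := by
    intro j h1 h2
    have : (⟨((((j:ℕ):ZMod n) - 1)).val, ZMod.val_lt _⟩ : Fin n) = ⟨j - 1, by omega⟩ :=
      Fin.ext (hval1 j h1 h2)
    rw [hPJdef]
    simp only []
    rw [this]
  -- the lift
  set lift : ZMod n → ℕ := fun z => if z.val = 0 then n else z.val with hliftdef
  have hlift_mem : ∀ z : ZMod n, lift z ∈ Icc 1 n := by
    intro z
    have := z.val_lt
    rw [Finset.mem_Icc, hliftdef]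
    simp only []
    split <;> omega
  have hcast_lift : ∀ z : ZMod n, ((lift z : ℕ) : ZMod n) = z := by
    intro z
    rw [hliftdef]
    simp only []
    split
    · rename_i h
      rw [ZMod.natCast_self]
      exact ((ZMod.val_eq_zero z).mp h).symm
    · exact ZMod.natCast_rightInverse z
  have hlift_cast : ∀ j ∈ Icc 1 n, lift ((j:ℕ) : ZMod n) = j := by
    intro j hj
    rw [Finset.mem_Icc] at hj
    rw [hliftdef]
    simp only [ZMod.val_natCast]
    rcases Nat.lt_or_ge j n with h | h
    · rw [Nat.mod_eq_of_lt h, if_neg (by omega)]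
    · have : j = n := by omega
      subst this
      rw [Nat.mod_self, if_pos rfl]
  -- condition bridge
  have hbig : (1 - (r:ℝ)/n) - (-((r:ℝ)/n)) = 1 := by ring
  have hneq : (1 - (r:ℝ)/n) ≠ (-((r:ℝ)/n)) := by
    intro h
    have : (1:ℝ) = 0 := by linarith [h]
    norm_num at this
  have hcond : ∀ j ∈ Icc 1 n, ∀ k ∈ Icc 1 n,
      ((j ≠ k ∧ inn (ee n j - ee n k) ν = 1) ↔ (PJ ((j:ℕ):ZMod n) ∧ ¬PJ ((k:ℕ):ZMod n))) := by
    intro j hj k hk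
    rw [Finset.mem_Icc] at hj hk
    rw [inn_ee_sub j k (Finset.mem_Icc.mpr hj) (Finset.mem_Icc.mpr hk)]
    constructor
    · rintro ⟨hjk, hsum⟩
      rcases hvals ⟨j - 1, by omega⟩ with h1 | h1 <;>
        rcases hvals ⟨k - 1, by omega⟩ with h2 | h2
      · exfalso; rw [h1, h2] at hsum
        have : (0:ℝ) = 1 := by linarith
        norm_num at this
      · refine ⟨(hPJ j hj.1 hj.2).mpr h1, fun hcon => ?_⟩
        exact hneq (((hPJ k hk.1 hk.2).mp hcon).symm.trans h2)
      · exfalso; rw [h1, h2] at hsum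
        have : (-1:ℝ) = 1 := by linarith
        norm_num at this
      · exfalso; rw [h1, h2] at hsum
        have : (0:ℝ) = 1 := by linarith
        norm_num at this
    · rintro ⟨hbigj, hnk⟩
      have h1 : ν ⟨j - 1, by omega⟩ = 1 - (r:ℝ)/n := (hPJ j hj.1 hj.2).mp hbigj
      have h2 : ν ⟨k - 1, by omega⟩ = -((r:ℝ)/n) := by
        rcases hvals ⟨k - 1, by omega⟩ with h | h
        · exact absurd ((hPJ k hk.1 hk.2).mpr h) hnk
        · exact h
      refine ⟨?_, by rw [h1, h2]; ring⟩
      intro hjk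
      apply hnk
      subst hjk
      exact hbigj
  -- per-pair combined factor value
  have hAB : ∀ j ∈ Icc 1 n, ∀ k ∈ Icc 1 n,
      (Real.sin (α * (inn (ee n j - ee n k) (xx0 n α) + g) / 2) /
        Real.sin (α * inn (ee n j - ee n k) (xx0 n α) / 2)) *
      (Real.sin (α * (inn (ee n j - ee n k) (-(xx0 n α)) + g) / 2) /
        Real.sin (α * inn (ee n j - ee n k) (-(xx0 n α)) / 2)) =
      Hz (((k:ℕ) : ZMod n) - ((j:ℕ) : ZMod n)) := by
    intro j hj k hk
    have hj' := Finset.mem_Icc.mp hj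
    have hk' := Finset.mem_Icc.mp hk
    have hα0 : α ≠ 0 := ne_of_gt hα
    have hn0' : (n:ℝ) ≠ 0 := ne_of_gt hn0
    have htx : inn (ee n j - ee n k) (xx0 n α) = 2 * π / (n * α) * ((k:ℝ) - j) := by
      rw [inn_ee_sub j k hj hk]
      simp only [xx0]
      push_cast [Nat.cast_sub hj'.1, Nat.cast_sub hk'.1]
      field_simp
      ring
    have htnx : inn (ee n j - ee n k) (-(xx0 n α)) = -(2 * π / (n * α) * ((k:ℝ) - j)) := by
      rw [inn_neg_right, htx]
    have e1 : α * (inn (ee n j - ee n k) (xx0 n α) + g) / 2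
        = π * ((k:ℝ) - j) / n + α * g / 2 := by
      rw [htx]; field_simp
    have e2 : α * inn (ee n j - ee n k) (xx0 n α) / 2 = π * ((k:ℝ) - j) / n := by
      rw [htx]; field_simp
    have e3 : α * (inn (ee n j - ee n k) (-(xx0 n α)) + g) / 2
        = -(π * ((k:ℝ) - j) / n) + α * g / 2 := by
      rw [htnx]; field_simp
    have e4 : α * inn (ee n j - ee n k) (-(xx0 n α)) / 2 = -(π * ((k:ℝ) - j) / n) := by
      rw [htnx]; field_simp
    rw [e1, e2, e3, e4, AB_formula]
    set d : ZMod n := ((k:ℕ) : ZMod n) - ((j:ℕ) : ZMod n) with hd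
    obtain ⟨m, hm⟩ : ∃ m : ℤ, (k:ℤ) - j - (d.val : ℤ) = n * m := by
      have h0 : (((k:ℤ) - j - (d.val : ℤ) : ℤ) : ZMod n) = 0 := by
        rw [Int.cast_sub, Int.cast_sub, Int.cast_natCast, Int.cast_natCast, Int.cast_natCast,
          ZMod.natCast_rightInverse d, hd]
        ring
      exact (ZMod.intCast_zmod_eq_zero_iff_dvd _ n).mp h0
    have hveq : π * ((k:ℝ) - j) / n = π * (d.val : ℝ) / n + m * π := by
      have hm' : (k:ℝ) - j = (d.val : ℝ) + n * m := by
        have := congrArg (fun z : ℤ => (z : ℝ)) hm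
        push_cast at this
        linarith
      rw [hm']
      field_simp
    rw [hveq, sin_sq_shift]
  -- assemble the product
  have hprod1 : Vnu n α g ν (xx0 n α) * Vnu n α g ν (-(xx0 n α)) =
      ∏ j ∈ Icc 1 n, ∏ k ∈ Icc 1 n,
        (if j ≠ k ∧ inn (ee n j - ee n k) ν = 1 then
          (Real.sin (α * (inn (ee n j - ee n k) (xx0 n α) + g) / 2) /
            Real.sin (α * inn (ee n j - ee n k) (xx0 n α) / 2)) *
          (Real.sin (α * (inn (ee n j - ee n k) (-(xx0 n α)) + g) / 2) /
            Real.sin (α * inn (ee n j - ee n k) (-(xx0 n α)) / 2))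
         else 1) := by
    rw [Vnu, Vnu, ← Finset.prod_mul_distrib]
    refine Finset.prod_congr rfl fun j hj => ?_
    rw [← Finset.prod_mul_distrib]
    refine Finset.prod_congr rfl fun k hk => ?_
    by_cases h : j ≠ k ∧ inn (ee n j - ee n k) ν = 1
    · rw [if_pos h, if_pos h, if_pos h]
    · rw [if_neg h, if_neg h, if_neg h, one_mul]
  have hprod2 : (∏ j ∈ Icc 1 n, ∏ k ∈ Icc 1 n,
        (if j ≠ k ∧ inn (ee n j - ee n k) ν = 1 then
          (Real.sin (α * (inn (ee n j - ee n k) (xx0 n α) + g) / 2) /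
            Real.sin (α * inn (ee n j - ee n k) (xx0 n α) / 2)) *
          (Real.sin (α * (inn (ee n j - ee n k) (-(xx0 n α)) + g) / 2) /
            Real.sin (α * inn (ee n j - ee n k) (-(xx0 n α)) / 2))
         else 1)) =
      ∏ a : ZMod n, ∏ b : ZMod n, (if PJ a ∧ ¬PJ b then Hz (b - a) else 1) := by
    apply Finset.prod_nbij' (fun j : ℕ => ((j:ℕ) : ZMod n)) lift
    · intro a _; exact Finset.mem_univ _
    · intro a _; exact hlift_mem a
    · intro a ha; exact hlift_cast a ha
    · intro a _; exact hcast_lift a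
    · intro j hj
      apply Finset.prod_nbij' (fun k : ℕ => ((k:ℕ) : ZMod n)) lift
      · intro a _; exact Finset.mem_univ _
      · intro a _; exact hlift_mem a
      · intro a ha; exact hlift_cast a ha
      · intro a _; exact hcast_lift a
      · intro k hk
        exact if_congr (hcond j hj k hk) (hAB j hj k hk) rfl
  have hprod3 : (∏ a : ZMod n, ∏ b : ZMod n, (if PJ a ∧ ¬PJ b then Hz (b - a) else 1)) =
      ∏ dd : ZMod n, Hz dd ^ cnt dd := by
    have step1 : (∏ a : ZMod n, ∏ b : ZMod n, (if PJ a ∧ ¬PJ b then Hz (b - a) else 1)) =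
        ∏ a : ZMod n, ∏ dd : ZMod n, (if PJ a ∧ ¬PJ (a + dd) then Hz dd else 1) := by
      refine Finset.prod_congr rfl fun a _ => ?_
      refine (Fintype.prod_equiv (Equiv.addLeft a)
        (fun dd => if PJ a ∧ ¬PJ (a + dd) then Hz dd else 1)
        (fun b => if PJ a ∧ ¬PJ b then Hz (b - a) else 1) (fun dd => ?_)).symm
      have : (Equiv.addLeft a) dd = a + dd := rfl
      rw [this]
      simp only [add_sub_cancel_left]
    rw [step1, Finset.prod_comm]
    refine Finset.prod_congr rfl fun dd _ => ?_
    rw [← Finset.prod_filter (fun a : ZMod n => PJ a ∧ ¬PJ (a + dd)) (fun _ => Hz dd),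
      Finset.prod_const]
  -- nonvanishing and positivity facts for Hz
  have hHne : ∀ dd : ZMod n, dd ≠ 0 → Hz dd ≠ 0 := by
    intro dd hdd
    have hv1 : 1 ≤ dd.val := by
      rcases Nat.eq_zero_or_pos dd.val with h | h
      · exact absurd ((ZMod.val_eq_zero dd).mp h) hdd
      · exact h
    have hv2 : dd.val ≤ n - 1 := by have := dd.val_lt; omega
    have hden : 0 < Real.sin (π * dd.val / n) := by
      apply Real.sin_pos_of_pos_of_lt_pi
      · positivity
      · rw [div_lt_iff₀ hn0]
        have : (dd.val : ℝ) < n := by exact_mod_cast dd.val_lt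
        nlinarith
    obtain ⟨hne1, hne2⟩ := theta_ne hn hα hp1 hpn htype dd.val hv1 hv2
    have hnum : Real.sin (π * dd.val / n) ^ 2 - Real.sin (α * g / 2) ^ 2 ≠ 0 := by
      rw [← trig_id (π * dd.val / n) (α * g / 2)]
      exact mul_ne_zero (by rw [show π * (dd.val:ℝ) / n + α * g / 2
        = π * dd.val / n + α * g / 2 from rfl]; exact hne2) hne1
    rw [hHzdef]
    exact div_ne_zero hnum (pow_ne_zero 2 (ne_of_gt hden))
  have hcnt0 : cnt 0 = 0 := by
    rw [hcntdef]
    simp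
  have hHfix : ∀ dd : ZMod n, dd ≠ 0 → -dd = dd → 0 < Hz dd := by
    intro dd hdd hfix
    haveI : NeZero dd := ⟨hdd⟩
    have hvneg : (-dd).val = n - dd.val := ZMod.val_neg_of_ne_zero dd
    have hv1 : 1 ≤ dd.val := by
      rcases Nat.eq_zero_or_pos dd.val with h | h
      · exact absurd ((ZMod.val_eq_zero dd).mp h) hdd
      · exact h
    have h2v : 2 * dd.val = n := by
      have h' := congrArg ZMod.val hfix
      rw [hvneg] at h'
      have := dd.val_lt
      omega
    have hvne : (dd.val : ℝ) ≠ 0 := by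
      have : (0:ℝ) < (dd.val:ℝ) := by exact_mod_cast hv1
      linarith
    have hvhalf : π * (dd.val : ℝ) / n = π / 2 := by
      have hcast : (n:ℝ) = 2 * (dd.val : ℝ) := by exact_mod_cast h2v.symm
      rw [hcast, mul_comm (2:ℝ) ((dd.val : ℕ):ℝ), ← div_div, mul_div_assoc,
        div_self hvne, mul_one]
    obtain ⟨hne1, hne2⟩ := theta_ne hn hα hp1 hpn htype dd.val hv1
      (by have := dd.val_lt; omega)
    rw [hvhalf, Real.sin_pi_div_two_sub] at hne1
    have hnum : (0:ℝ) < 1 ^ 2 - Real.sin (α * g / 2) ^ 2 := by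
      have hpyth := Real.sin_sq_add_cos_sq (α * g / 2)
      have hcsq : (0:ℝ) < Real.cos (α * g / 2) ^ 2 := by positivity
      nlinarith
    rw [hHzdef]
    simp only []
    rw [hvhalf, Real.sin_pi_div_two]
    exact div_pos hnum (by norm_num)
  have hHneg : ∀ dd : ZMod n, Hz (-dd) = Hz dd := by
    intro dd
    by_cases h : dd = 0
    · rw [h, neg_zero]
    · haveI : NeZero dd := ⟨h⟩
      have hvneg : (-dd).val = n - dd.val := ZMod.val_neg_of_ne_zero dd
      have hle : dd.val ≤ n := le_of_lt dd.val_lt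
      have harg : π * ((-dd).val : ℝ) / n = π - π * dd.val / n := by
        rw [hvneg]
        push_cast [Nat.cast_sub hle]
        field_simp
      rw [hHzdef]
      simp only []
      rw [harg, Real.sin_pi_sub]
  have hcnt_neg : ∀ dd : ZMod n, cnt (-dd) = cnt dd := fun dd => (count_shift PJ dd).symm
  rw [hprod1, hprod2, hprod3]
  apply prod_pos_of_involution (fun dd : ZMod n => Hz dd ^ cnt dd) (fun dd => -dd)
    (fun dd => neg_neg dd) (fun dd => by rw [hHneg, hcnt_neg]) Finset.univ
    (fun dd _ => Finset.mem_univ _)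
  · intro dd _
    by_cases h : dd = 0
    · rw [h, hcnt0, pow_zero]; norm_num
    · exact pow_ne_zero _ (hHne dd h)
  · intro dd _ hfix
    by_cases h : dd = 0
    · rw [h, hcnt0, pow_zero]; norm_num
    · exact pow_pos (hHfix dd h hfix) _

end Vpos


lemma lam_finite (n : ℕ) (Mabs : ℝ) (ω : ℕ → Fin n → ℝ) : (Lam n Mabs ω).Finite := by
  classical
  set K := ⌊Mabs⌋₊ with hK
  have h : Lam n Mabs ω ⊆ Set.range (fun m : ({x // x ∈ Icc 1 (n-1)} → Fin (K+1)) =>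
      ∑ j ∈ (Icc 1 (n-1)).attach, ((m j : ℕ) : ℝ) • ω j) := by
    rintro μ ⟨m, hsum, rfl⟩
    have hbound : ∀ j ∈ Icc 1 (n-1), m j ≤ K := by
      intro j hj
      apply Nat.le_floor
      have hstep : ((m j : ℕ) : ℝ) ≤ ∑ j' ∈ Icc 1 (n-1), ((m j' : ℕ) : ℝ) :=
        Finset.single_le_sum (f := fun j' => ((m j' : ℕ) : ℝ))
          (fun i _ => by positivity) hj
      linarith
    refine ⟨fun j => ⟨m j.val, by have := hbound j.val j.2; omega⟩, ?_⟩
    exact Finset.sum_attach (Icc 1 (n-1)) (fun j => ((m j : ℕ) : ℝ) • ω j)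
  exact Set.Finite.subset (Set.finite_range _) h

lemma mem_orbitF_iff {n r : ℕ} {ν : Fin n → ℝ} : ν ∈ orbitF n r ↔ inOrbit n r ν := by
  rw [orbitF, Finset.mem_image, inOrbit]
  constructor
  · rintro ⟨σ, -, h⟩; exact ⟨σ, h.symm⟩
  · rintro ⟨σ, h⟩; exact ⟨σ, Finset.mem_univ _, h.symm⟩

lemma Wmu_symm {n p : ℕ} {α g : ℝ} {ω : ℕ → Fin n → ℝ} {s : (Fin n → ℝ) → ℝ}
    {μ ν : Fin n → ℝ} (hμ : μ ∈ Lam n |2 * π * ↑p / α - ↑n * g| ω) (hμν : μ + ν ∈ Lam n |2 * π * ↑p / α - ↑n * g| ω)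
    (hsν : s ν = s (-ν)) :
    Wmu n p α g ω s μ ν = Wmu n p α g ω s (μ + ν) (-ν) := by
  rw [Wmu, Wmu, if_pos hμν, if_pos (by rw [add_neg_cancel_right]; exact hμ), hsν]
  congr 1
  rw [Vnu_neg, Vnu_neg]
  have e2 : μ + ν + -ν = μ := add_neg_cancel_right μ ν
  rw [e2]
  have e1 : -(rhoP n p α g ω + Real.sign (2 * π * ↑p / α - ↑n * g) • (μ + ν)) = -rhoP n p α g ω - Real.sign (2 * π * ↑p / α - ↑n * g) • (μ + ν) := by abel
  have e3 : -(-rhoP n p α g ω - Real.sign (2 * π * ↑p / α - ↑n * g) • μ) = rhoP n p α g ω + Real.sign (2 * π * ↑p / α - ↑n * g) • μ := by abel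
  rw [e1, e3, mul_comm]

lemma Wmu_zero {n p : ℕ} {α g : ℝ} {ω : ℕ → Fin n → ℝ} {s : (Fin n → ℝ) → ℝ}
    {μ ν : Fin n → ℝ} (h : μ + ν ∉ Lam n |2 * π * ↑p / α - ↑n * g| ω) :
    Wmu n p α g ω s μ ν = 0 := by
  rw [Wmu, if_neg h]

/-- Proposition 2.3: `(Ŝ_{r,M}φ, ψ) = (φ, Ŝ_{n-r,M}ψ)`, and consequently
each `Ĥ_{r,M} = (Ŝ_{r,M} + Ŝ_{n-r,M})/2` is self-adjoint. -/
theorem statement11 (n p q : ℕ) (α g : ℝ)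
    (hn : 2 ≤ n) (hα : 0 < α) (hp1 : 1 ≤ p) (hpn : p ≤ n - 1) (hcop : Nat.Coprime p n)
    (htype : TypeI n p q α g)
    (Mz : ℤ) (hMz : 2 * π * p / α - n * g = (Mz : ℝ)) (hMz0 : Mz ≠ 0)
    (ω : ℕ → Fin n → ℝ)
    (hωE : ∀ k : ℕ, 1 ≤ k → k ≤ n - 1 → ∑ i, ω k i = 0)
    (hωδ : ∀ j : ℕ, 1 ≤ j → j ≤ n - 1 → ∀ k : ℕ, 1 ≤ k → k ≤ n - 1 →
      inn (aa n p j) (ω k) = if j = k then (1 : ℝ) else 0)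
    (s : (Fin n → ℝ) → ℝ)
    (hs : ∀ r : ℕ, 1 ≤ r → r ≤ n - 1 → ∀ ν : Fin n → ℝ, inOrbit n r ν →
      ∀ x ∈ SigmaInt n p α g, s ν = Real.sign (Vnu n α g ν x))
    (r : ℕ) (hr1 : 1 ≤ r) (hrn : r ≤ n - 1)
    (φ ψ : (Fin n → ℝ) → ℂ) :
    ip n p α g ω (SOp n p r α g ω s φ) ψ =
      ip n p α g ω φ (SOp n p (n - r) α g ω s ψ) ∧
    ip n p α g ω
        (fun x => (SOp n p r α g ω s φ x + SOp n p (n - r) α g ω s φ x) / 2) ψ =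
      ip n p α g ω φ
        (fun x => (SOp n p r α g ω s ψ x + SOp n p (n - r) α g ω s ψ x) / 2) := by
  haveI : NeZero n := ⟨by omega⟩
  have hπ := Real.pi_pos
  have hMne : ((Mz:ℝ)) ≠ 0 := by exact_mod_cast hMz0
  have hsgn : Real.sign (2 * π * ↑p / α - ↑n * g) = 1 ∨ Real.sign (2 * π * ↑p / α - ↑n * g) = -1 := by
    rw [hMz]
    rcases lt_or_gt_of_ne hMne with h | h
    · right; exact Real.sign_of_neg h
    · left; exact Real.sign_of_pos h
  have hsmul : ∀ μ : Fin n → ℝ, Real.sign (2 * π * ↑p / α - ↑n * g) • (rhoP n p α g ω + Real.sign (2 * π * ↑p / α - ↑n * g) • μ - rhoP n p α g ω) = μ := by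
    intro μ
    rw [add_sub_cancel_left, smul_smul]
    rcases hsgn with h | h <;> rw [h] <;> norm_num
  have hsadd : ∀ μ ν : Fin n → ℝ, (rhoP n p α g ω + Real.sign (2 * π * ↑p / α - ↑n * g) • μ) + Real.sign (2 * π * ↑p / α - ↑n * g) • ν = rhoP n p α g ω + Real.sign (2 * π * ↑p / α - ↑n * g) • (μ + ν) := by
    intro μ ν
    rw [smul_add, add_assoc]
  have hFin : (Lam n |2 * π * ↑p / α - ↑n * g| ω).Finite := lam_finite n _ ω
  have hip : ∀ φ' ψ' : (Fin n → ℝ) → ℂ, ip n p α g ω φ' ψ' =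
      ∑ μ ∈ hFin.toFinset, φ' (rhoP n p α g ω + Real.sign (2 * π * ↑p / α - ↑n * g) • μ) * (starRingEnd ℂ) (ψ' (rhoP n p α g ω + Real.sign (2 * π * ↑p / α - ↑n * g) • μ)) := by
    intro φ' ψ'
    rw [ip]
    exact finsum_mem_eq_finite_toFinset_sum _ hFin
  -- the sign equality
  have hx0 : xx0 n α ∈ SigmaInt n p α g := xx0_mem (by omega) hα hpn hMz hMz0
  have hsEq : ∀ r' : ℕ, 1 ≤ r' → r' ≤ n - 1 → ∀ ν ∈ orbitF n r', s ν = s (-ν) := by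
    intro r' h1 h2 ν hν
    have e1 := hs r' h1 h2 ν (mem_orbitF_iff.mp hν) (xx0 n α) hx0
    have e2 := hs (n - r') (by omega) (by omega) (-ν)
      (mem_orbitF_iff.mp (neg_mem_orbitF h1 h2 hn hν)) (xx0 n α) hx0
    rw [e1, e2, Vnu_neg]
    have hpos := Vnu_mul_pos hn hα hp1 hpn htype hν
    rcases mul_pos_iff.mp hpos with ⟨ha, hb⟩ | ⟨ha, hb⟩
    · rw [Real.sign_of_pos ha, Real.sign_of_pos hb]
    · rw [Real.sign_of_neg ha, Real.sign_of_neg hb]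
  -- the main adjointness relation
  have main : ∀ r' : ℕ, 1 ≤ r' → r' ≤ n - 1 → ∀ φ' ψ' : (Fin n → ℝ) → ℂ,
      ip n p α g ω (SOp n p r' α g ω s φ') ψ' =
        ip n p α g ω φ' (SOp n p (n - r') α g ω s ψ') := by
    intro r' h1 h2 φ' ψ'
    rw [hip, hip]
    have hLHS : (∑ μ ∈ hFin.toFinset,
          SOp n p r' α g ω s φ' (rhoP n p α g ω + Real.sign (2 * π * ↑p / α - ↑n * g) • μ) * (starRingEnd ℂ) (ψ' (rhoP n p α g ω + Real.sign (2 * π * ↑p / α - ↑n * g) • μ))) =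
        ∑ x ∈ hFin.toFinset ×ˢ orbitF n r',
          (Wmu n p α g ω s x.1 x.2 : ℂ) * φ' (rhoP n p α g ω + Real.sign (2 * π * ↑p / α - ↑n * g) • (x.1 + x.2)) *
            (starRingEnd ℂ) (ψ' (rhoP n p α g ω + Real.sign (2 * π * ↑p / α - ↑n * g) • x.1)) := by
      rw [Finset.sum_product]
      refine Finset.sum_congr rfl fun μ hμ => ?_
      rw [SOp, Finset.sum_mul]
      refine Finset.sum_congr rfl fun ν hν => ?_
      rw [hsmul μ, hsadd μ ν]
    have hRHS : (∑ μ ∈ hFin.toFinset,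
          φ' (rhoP n p α g ω + Real.sign (2 * π * ↑p / α - ↑n * g) • μ) * (starRingEnd ℂ) (SOp n p (n - r') α g ω s ψ' (rhoP n p α g ω + Real.sign (2 * π * ↑p / α - ↑n * g) • μ))) =
        ∑ x ∈ hFin.toFinset ×ˢ orbitF n (n - r'),
          (Wmu n p α g ω s x.1 x.2 : ℂ) * φ' (rhoP n p α g ω + Real.sign (2 * π * ↑p / α - ↑n * g) • x.1) *
            (starRingEnd ℂ) (ψ' (rhoP n p α g ω + Real.sign (2 * π * ↑p / α - ↑n * g) • (x.1 + x.2))) := by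
      rw [Finset.sum_product]
      refine Finset.sum_congr rfl fun μ hμ => ?_
      rw [SOp, map_sum, Finset.mul_sum]
      refine Finset.sum_congr rfl fun ν hν => ?_
      rw [hsmul μ, hsadd μ ν, map_mul, Complex.conj_ofReal]
      ring
    rw [hLHS, hRHS]
    rw [← Finset.sum_filter_add_sum_filter_not (hFin.toFinset ×ˢ orbitF n r')
      (fun x => x.1 + x.2 ∈ Lam n |2 * π * ↑p / α - ↑n * g| ω)]
    rw [← Finset.sum_filter_add_sum_filter_not (hFin.toFinset ×ˢ orbitF n (n - r'))
      (fun x => x.1 + x.2 ∈ Lam n |2 * π * ↑p / α - ↑n * g| ω)]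
    have hz1 : (∑ x ∈ (hFin.toFinset ×ˢ orbitF n r').filter
        (fun x => ¬(x.1 + x.2 ∈ Lam n |2 * π * ↑p / α - ↑n * g| ω)),
          (Wmu n p α g ω s x.1 x.2 : ℂ) * φ' (rhoP n p α g ω + Real.sign (2 * π * ↑p / α - ↑n * g) • (x.1 + x.2)) *
            (starRingEnd ℂ) (ψ' (rhoP n p α g ω + Real.sign (2 * π * ↑p / α - ↑n * g) • x.1))) = 0 := by
      apply Finset.sum_eq_zero
      intro x hx
      rw [Wmu_zero (Finset.mem_filter.mp hx).2]
      simp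
    have hz2 : (∑ x ∈ (hFin.toFinset ×ˢ orbitF n (n - r')).filter
        (fun x => ¬(x.1 + x.2 ∈ Lam n |2 * π * ↑p / α - ↑n * g| ω)),
          (Wmu n p α g ω s x.1 x.2 : ℂ) * φ' (rhoP n p α g ω + Real.sign (2 * π * ↑p / α - ↑n * g) • x.1) *
            (starRingEnd ℂ) (ψ' (rhoP n p α g ω + Real.sign (2 * π * ↑p / α - ↑n * g) • (x.1 + x.2)))) = 0 := by
      apply Finset.sum_eq_zero
      intro x hx
      rw [Wmu_zero (Finset.mem_filter.mp hx).2]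
      simp
    rw [hz1, hz2, add_zero, add_zero]
    apply Finset.sum_nbij' (fun x : (Fin n → ℝ) × (Fin n → ℝ) => (x.1 + x.2, -x.2))
      (fun y : (Fin n → ℝ) × (Fin n → ℝ) => (y.1 + y.2, -y.2))
    · intro x hx
      obtain ⟨hxm, hxc⟩ := Finset.mem_filter.mp hx
      obtain ⟨hx1, hx2⟩ := Finset.mem_product.mp hxm
      refine Finset.mem_filter.mpr ⟨Finset.mem_product.mpr ⟨?_, ?_⟩, ?_⟩
      · exact (Set.Finite.mem_toFinset hFin).mpr hxc
      · exact neg_mem_orbitF h1 h2 hn hx2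
      · show (x.1 + x.2) + -x.2 ∈ Lam n |2 * π * ↑p / α - ↑n * g| ω
        rw [add_neg_cancel_right]
        exact (Set.Finite.mem_toFinset hFin).mp hx1
    · intro y hy
      obtain ⟨hym, hyc⟩ := Finset.mem_filter.mp hy
      obtain ⟨hy1, hy2⟩ := Finset.mem_product.mp hym
      refine Finset.mem_filter.mpr ⟨Finset.mem_product.mpr ⟨?_, ?_⟩, ?_⟩
      · exact (Set.Finite.mem_toFinset hFin).mpr hyc
      · have hh := neg_mem_orbitF (by omega : 1 ≤ n - r') (by omega : n - r' ≤ n - 1) hn hy2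
        rwa [show n - (n - r') = r' by omega] at hh
      · show (y.1 + y.2) + -y.2 ∈ Lam n |2 * π * ↑p / α - ↑n * g| ω
        rw [add_neg_cancel_right]
        exact (Set.Finite.mem_toFinset hFin).mp hy1
    · intro x hx
      simp only [add_neg_cancel_right, neg_neg]
    · intro y hy
      simp only [add_neg_cancel_right, neg_neg]
    · intro x hx
      obtain ⟨hxm, hxc⟩ := Finset.mem_filter.mp hx
      obtain ⟨hx1, hx2⟩ := Finset.mem_product.mp hxm
      have hμL : x.1 ∈ Lam n |2 * π * ↑p / α - ↑n * g| ω := (Set.Finite.mem_toFinset hFin).mp hx1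
      rw [Wmu_symm hμL hxc (hsEq r' h1 h2 x.2 hx2)]
      simp only [add_neg_cancel_right]
  refine ⟨main r hr1 hrn φ ψ, ?_⟩
  have h1 := main r hr1 hrn φ ψ
  have h2 := main (n - r) (by omega) (by omega) φ ψ
  rw [show n - (n - r) = r by omega] at h2
  rw [hip, hip]
  have expand : ∀ μ : Fin n → ℝ,
      (SOp n p r α g ω s φ (rhoP n p α g ω + Real.sign (2 * π * ↑p / α - ↑n * g) • μ) + SOp n p (n - r) α g ω s φ (rhoP n p α g ω + Real.sign (2 * π * ↑p / α - ↑n * g) • μ)) / 2 *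
        (starRingEnd ℂ) (ψ (rhoP n p α g ω + Real.sign (2 * π * ↑p / α - ↑n * g) • μ)) =
      (SOp n p r α g ω s φ (rhoP n p α g ω + Real.sign (2 * π * ↑p / α - ↑n * g) • μ) * (starRingEnd ℂ) (ψ (rhoP n p α g ω + Real.sign (2 * π * ↑p / α - ↑n * g) • μ)) +
       SOp n p (n - r) α g ω s φ (rhoP n p α g ω + Real.sign (2 * π * ↑p / α - ↑n * g) • μ) * (starRingEnd ℂ) (ψ (rhoP n p α g ω + Real.sign (2 * π * ↑p / α - ↑n * g) • μ))) / 2 := by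
    intro μ; ring
  have expand2 : ∀ μ : Fin n → ℝ,
      φ (rhoP n p α g ω + Real.sign (2 * π * ↑p / α - ↑n * g) • μ) * (starRingEnd ℂ)
          ((SOp n p r α g ω s ψ (rhoP n p α g ω + Real.sign (2 * π * ↑p / α - ↑n * g) • μ) + SOp n p (n - r) α g ω s ψ (rhoP n p α g ω + Real.sign (2 * π * ↑p / α - ↑n * g) • μ)) / 2) =
      (φ (rhoP n p α g ω + Real.sign (2 * π * ↑p / α - ↑n * g) • μ) * (starRingEnd ℂ) (SOp n p r α g ω s ψ (rhoP n p α g ω + Real.sign (2 * π * ↑p / α - ↑n * g) • μ)) +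
       φ (rhoP n p α g ω + Real.sign (2 * π * ↑p / α - ↑n * g) • μ) * (starRingEnd ℂ) (SOp n p (n - r) α g ω s ψ (rhoP n p α g ω + Real.sign (2 * π * ↑p / α - ↑n * g) • μ))) / 2 := by
    intro μ
    rw [map_div₀, map_add]
    have : (starRingEnd ℂ) 2 = 2 := by
      rw [show (2:ℂ) = ((2:ℝ):ℂ) by norm_num, Complex.conj_ofReal]
    rw [this]
    ring
  calc (∑ μ ∈ hFin.toFinset,
        (SOp n p r α g ω s φ (rhoP n p α g ω + Real.sign (2 * π * ↑p / α - ↑n * g) • μ) + SOp n p (n - r) α g ω s φ (rhoP n p α g ω + Real.sign (2 * π * ↑p / α - ↑n * g) • μ)) / 2 *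
          (starRingEnd ℂ) (ψ (rhoP n p α g ω + Real.sign (2 * π * ↑p / α - ↑n * g) • μ)))
      = (∑ μ ∈ hFin.toFinset,
          (SOp n p r α g ω s φ (rhoP n p α g ω + Real.sign (2 * π * ↑p / α - ↑n * g) • μ) * (starRingEnd ℂ) (ψ (rhoP n p α g ω + Real.sign (2 * π * ↑p / α - ↑n * g) • μ)) +
           SOp n p (n - r) α g ω s φ (rhoP n p α g ω + Real.sign (2 * π * ↑p / α - ↑n * g) • μ) * (starRingEnd ℂ) (ψ (rhoP n p α g ω + Real.sign (2 * π * ↑p / α - ↑n * g) • μ)))) / 2 := by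
        rw [Finset.sum_div]
        exact Finset.sum_congr rfl fun μ _ => expand μ
    _ = (∑ μ ∈ hFin.toFinset,
          SOp n p r α g ω s φ (rhoP n p α g ω + Real.sign (2 * π * ↑p / α - ↑n * g) • μ) * (starRingEnd ℂ) (ψ (rhoP n p α g ω + Real.sign (2 * π * ↑p / α - ↑n * g) • μ)) +
         ∑ μ ∈ hFin.toFinset,
          SOp n p (n - r) α g ω s φ (rhoP n p α g ω + Real.sign (2 * π * ↑p / α - ↑n * g) • μ) * (starRingEnd ℂ) (ψ (rhoP n p α g ω + Real.sign (2 * π * ↑p / α - ↑n * g) • μ))) / 2 := by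
        rw [Finset.sum_add_distrib]
    _ = (∑ μ ∈ hFin.toFinset,
          φ (rhoP n p α g ω + Real.sign (2 * π * ↑p / α - ↑n * g) • μ) * (starRingEnd ℂ) (SOp n p (n - r) α g ω s ψ (rhoP n p α g ω + Real.sign (2 * π * ↑p / α - ↑n * g) • μ)) +
         ∑ μ ∈ hFin.toFinset,
          φ (rhoP n p α g ω + Real.sign (2 * π * ↑p / α - ↑n * g) • μ) * (starRingEnd ℂ) (SOp n p r α g ω s ψ (rhoP n p α g ω + Real.sign (2 * π * ↑p / α - ↑n * g) • μ))) / 2 := by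
        rw [hip, hip] at h1 h2
        rw [h1, h2]
    _ = (∑ μ ∈ hFin.toFinset,
          (φ (rhoP n p α g ω + Real.sign (2 * π * ↑p / α - ↑n * g) • μ) * (starRingEnd ℂ) (SOp n p r α g ω s ψ (rhoP n p α g ω + Real.sign (2 * π * ↑p / α - ↑n * g) • μ)) +
           φ (rhoP n p α g ω + Real.sign (2 * π * ↑p / α - ↑n * g) • μ) * (starRingEnd ℂ) (SOp n p (n - r) α g ω s ψ (rhoP n p α g ω + Real.sign (2 * π * ↑p / α - ↑n * g) • μ)))) / 2 := by
        rw [Finset.sum_add_distrib]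
        ring
    _ = ∑ μ ∈ hFin.toFinset,
          φ (rhoP n p α g ω + Real.sign (2 * π * ↑p / α - ↑n * g) • μ) * (starRingEnd ℂ)
            ((SOp n p r α g ω s ψ (rhoP n p α g ω + Real.sign (2 * π * ↑p / α - ↑n * g) • μ) + SOp n p (n - r) α g ω s ψ (rhoP n p α g ω + Real.sign (2 * π * ↑p / α - ↑n * g) • μ)) / 2) := by
        rw [Finset.sum_div]
        exact (Finset.sum_congr rfl fun μ _ => expand2 μ).symm
end
end

section
/- Let n ≥ 2 be an integer and α > 0. For u, v ∈ E_n, one has ℰ_r(u) = ℰ_r(v) for all r = 1,…,n−1 if and only if there exist a permutation σ of {1,…,n} and integers k_1,…,k_n with k_1+…+k_n = 0 such that u_j = v_{σ(j)} + (2π/α)·k_j for all j = 1,…,n. -/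
noncomputable section
open Real Finset
open scoped Classical

/-- Auxiliary: the vector with `1 - r/n` on `S` and `-r/n` off `S`. -/
def nuS (n r : ℕ) (S : Finset (Fin n)) : Fin n → ℝ :=
  fun i => (if i ∈ S then 1 else 0) - (r : ℝ) / n

lemma filterT_card (n r : ℕ) (hrn : r ≤ n) :
    ((univ : Finset (Fin n)).filter fun i : Fin n => (i : ℕ) < r).card = r := by
  have : ((univ : Finset (Fin n)).filter fun i : Fin n => (i : ℕ) < r)
      = (univ : Finset (Fin r)).map (Fin.castLEEmb hrn) := by
    ext i
    simp only [mem_filter, mem_univ, true_and, Finset.mem_map, Fin.castLEEmb]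
    constructor
    · intro h; exact ⟨⟨i, h⟩, by ext; simp⟩
    · rintro ⟨j, rfl⟩; simpa using j.isLt
  rw [this, Finset.card_map, Finset.card_univ, Fintype.card_fin]

lemma orbitF_eq_image (n r : ℕ) (hrn : r ≤ n) :
    orbitF n r = (Finset.powersetCard r (univ : Finset (Fin n))).image (nuS n r) := by
  set T : Finset (Fin n) := (univ : Finset (Fin n)).filter (fun i : Fin n => (i : ℕ) < r) with hT
  have hTmem : ∀ i : Fin n, i ∈ T ↔ (i : ℕ) < r := by intro i; simp [hT]
  have hTcard : T.card = r := filterT_card n r hrn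
  ext ν
  simp only [orbitF, Finset.mem_image, Finset.mem_univ, true_and, Finset.mem_powersetCard]
  constructor
  · rintro ⟨σ, rfl⟩
    refine ⟨T.map σ.symm.toEmbedding, ⟨Finset.subset_univ _, by rw [Finset.card_map, hTcard]⟩, ?_⟩
    funext i
    have hmem : i ∈ T.map σ.symm.toEmbedding ↔ (σ i : ℕ) < r := by
      simp only [Finset.mem_map, Equiv.coe_toEmbedding]
      constructor
      · rintro ⟨j, hj, rfl⟩; simpa using (hTmem j).1 hj
      · intro h; exact ⟨σ i, (hTmem _).2 h, by simp⟩
    simp only [nuS, omegaStd, Nat.add_one_le_iff, hmem]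
  · rintro ⟨S, ⟨-, hScard⟩, rfl⟩
    have h1 : Fintype.card {i : Fin n // i ∈ S} = Fintype.card {i : Fin n // i ∈ T} := by
      simp [Fintype.card_subtype, hScard, hTcard]
    have h2 : Fintype.card {i : Fin n // ¬ i ∈ S} = Fintype.card {i : Fin n // ¬ i ∈ T} := by
      rw [Fintype.card_subtype_compl, Fintype.card_subtype_compl, h1]
    let e1 := Fintype.equivOfCardEq h1
    let e2 := Fintype.equivOfCardEq h2
    let σ : Equiv.Perm (Fin n) :=
      ((Equiv.sumCompl (· ∈ S)).symm.trans ((e1.sumCongr e2).trans (Equiv.sumCompl (· ∈ T))))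
    have hσ : ∀ i, σ i ∈ T ↔ i ∈ S := by
      intro i
      by_cases h : i ∈ S
      · have : σ i = (e1 ⟨i, h⟩ : {i : Fin n // i ∈ T}).1 := by
          simp [σ, Equiv.sumCompl_symm_apply_of_pos h]
        simp [this, h, (e1 ⟨i, h⟩).2]
      · have : σ i = (e2 ⟨i, h⟩ : {i : Fin n // ¬ i ∈ T}).1 := by
          simp [σ, Equiv.sumCompl_symm_apply_of_neg h]
        simp [this, h, (e2 ⟨i, h⟩).2]
    refine ⟨σ, ?_⟩
    funext i
    have hiff : (σ i : ℕ) + 1 ≤ r ↔ i ∈ S := by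
      rw [Nat.add_one_le_iff, ← hTmem, hσ]
    simp only [omegaStd, nuS, hiff]

lemma calE_eq_esymm (n r : ℕ) (α : ℝ) (u : Fin n → ℝ) (hu : ∑ i, u i = 0)
    (hrn : r ≤ n) :
    calE n r α u =
      ∑ S ∈ Finset.powersetCard r (univ : Finset (Fin n)),
        ∏ i ∈ S, Complex.exp (Complex.I * (α : ℂ) * (u i : ℂ)) := by
  rw [calE, orbitF_eq_image n r hrn, Finset.sum_image]
  · refine Finset.sum_congr rfl fun S hS => ?_
    have hinn : inn (nuS n r S) u = ∑ i ∈ S, u i := by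
      simp only [inn, nuS, sub_mul, Finset.sum_sub_distrib, ite_mul, one_mul, zero_mul]
      rw [Finset.sum_ite_mem, Finset.univ_inter, ← Finset.mul_sum, hu, mul_zero, sub_zero]
    rw [hinn]
    push_cast
    rw [Finset.mul_sum, Complex.exp_sum]
  · intro S hS S' hS' h
    ext i
    have hi := congrFun h i
    by_cases h1 : i ∈ S <;> by_cases h2 : i ∈ S' <;>
      simp [nuS, h1, h2] at hi ⊢ <;> linarith

/-- for `u, v ∈ E_n`, `ℰ_r(u) = ℰ_r(v)` for all `r = 1,…,n-1` iff `u` is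
obtained from `v` by a coordinate permutation followed by a translation from `(2π/α)Q`. -/
theorem statement18 (n : ℕ) (α : ℝ) (hn : 2 ≤ n) (hα : 0 < α)
    (u v : Fin n → ℝ) (hu : ∑ i, u i = 0) (hv : ∑ i, v i = 0) :
    (∀ r : ℕ, 1 ≤ r → r ≤ n - 1 → calE n r α u = calE n r α v) ↔
      ∃ σ : Equiv.Perm (Fin n), ∃ kk : Fin n → ℤ, (∑ i, kk i) = 0 ∧
        ∀ i, u i = v (σ i) + 2 * π / α * kk i := by
  have hα' : α ≠ 0 := ne_of_gt hα
  have hαC : (α : ℂ) ≠ 0 := by exact_mod_cast hα'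
  have key : ∀ w : Fin n → ℝ, (∑ i, w i = 0) → ∀ r ≤ n, calE n r α w =
      ((univ : Finset (Fin n)).val.map
        (fun i => Complex.exp (Complex.I * (α : ℂ) * (w i : ℂ)))).esymm r := by
    intro w hw r hrn
    rw [calE_eq_esymm n r α w hw hrn, Finset.esymm_map_val]
  have hprod : ∀ w : Fin n → ℝ, (∑ i, w i = 0) →
      (∏ i : Fin n, Complex.exp (Complex.I * (α : ℂ) * (w i : ℂ))) = 1 := by
    intro w hw
    rw [← Complex.exp_sum, ← Finset.mul_sum]
    have h0 : (∑ i : Fin n, (w i : ℂ)) = 0 := by exact_mod_cast congrArg Complex.ofReal hw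
    rw [h0, mul_zero, Complex.exp_zero]
  constructor
  · intro h
    have hs_card : Multiset.card ((univ : Finset (Fin n)).val.map
        (fun i => Complex.exp (Complex.I * (α : ℂ) * (u i : ℂ)))) = n := by simp
    have ht_card : Multiset.card ((univ : Finset (Fin n)).val.map
        (fun i => Complex.exp (Complex.I * (α : ℂ) * (v i : ℂ)))) = n := by simp
    have hesymm : ∀ m ≤ n,
        ((univ : Finset (Fin n)).val.map
          (fun i => Complex.exp (Complex.I * (α : ℂ) * (u i : ℂ)))).esymm m =
        ((univ : Finset (Fin n)).val.map
          (fun i => Complex.exp (Complex.I * (α : ℂ) * (v i : ℂ)))).esymm m := by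
      intro m hmn
      rcases Nat.eq_zero_or_pos m with hm0 | hm0
      · subst hm0; simp [Multiset.esymm]
      rcases eq_or_lt_of_le hmn with hmn' | hmn'
      · subst hmn'
        have hps : Finset.powersetCard m (univ : Finset (Fin m)) = {univ} := by
          simpa using Finset.powersetCard_self (univ : Finset (Fin m))
        rw [Finset.esymm_map_val, Finset.esymm_map_val, hps,
          Finset.sum_singleton, Finset.sum_singleton, hprod u hu, hprod v hv]
      · have := h m hm0 (by omega)
        rwa [key u hu m (le_of_lt hmn'), key v hv m (le_of_lt hmn')] at this
    have hP : ((((univ : Finset (Fin n)).val.map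
          (fun i => Complex.exp (Complex.I * (α : ℂ) * (u i : ℂ)))).map
            fun a => Polynomial.X - Polynomial.C a).prod) =
        ((((univ : Finset (Fin n)).val.map
          (fun i => Complex.exp (Complex.I * (α : ℂ) * (v i : ℂ)))).map
            fun a => Polynomial.X - Polynomial.C a).prod) := by
      apply Polynomial.ext; intro k
      rcases le_or_gt k n with hk | hk
      · rw [Multiset.prod_X_sub_C_coeff _ (by rw [hs_card]; exact hk),
          Multiset.prod_X_sub_C_coeff _ (by rw [ht_card]; exact hk), hs_card, ht_card,
          hesymm (n - k) (Nat.sub_le n k)]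
      · rw [Polynomial.coeff_eq_zero_of_natDegree_lt, Polynomial.coeff_eq_zero_of_natDegree_lt] <;>
          · rw [Polynomial.natDegree_multiset_prod_X_sub_C_eq_card]
            first
              | (rw [hs_card]; exact hk)
              | (rw [ht_card]; exact hk)
    have hst := congrArg Polynomial.roots hP
    rw [Polynomial.roots_multiset_prod_X_sub_C, Polynomial.roots_multiset_prod_X_sub_C] at hst
    have hfib : ∀ c : ℂ,
        Fintype.card {i : Fin n // Complex.exp (Complex.I * (α : ℂ) * (u i : ℂ)) = c} =
        Fintype.card {i : Fin n // Complex.exp (Complex.I * (α : ℂ) * (v i : ℂ)) = c} := by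
      intro c
      have h1 := congrArg (Multiset.count c) hst
      rw [Multiset.count_map, Multiset.count_map] at h1
      rw [Fintype.card_subtype, Fintype.card_subtype]
      have h2 : ∀ w : Fin n → ℝ,
          ((univ : Finset (Fin n)).filter
            (fun i => Complex.exp (Complex.I * (α : ℂ) * (w i : ℂ)) = c)).card
          = Multiset.card (Multiset.filter
              (fun i => c = Complex.exp (Complex.I * (α : ℂ) * (w i : ℂ)))
              (univ : Finset (Fin n)).val) := by
        intro w
        rw [Finset.card_def, Finset.filter_val]
        exact congrArg Multiset.card (Multiset.filter_congr (fun x _ => eq_comm))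
      rw [h2 u, h2 v, h1]
    let e : ∀ c : ℂ, {i : Fin n // Complex.exp (Complex.I * (α : ℂ) * (u i : ℂ)) = c} ≃
        {i : Fin n // Complex.exp (Complex.I * (α : ℂ) * (v i : ℂ)) = c} :=
      fun c => Fintype.equivOfCardEq (hfib c)
    let σ : Equiv.Perm (Fin n) := Equiv.ofFiberEquiv e
    have hσ : ∀ i, Complex.exp (Complex.I * (α : ℂ) * (u i : ℂ)) =
        Complex.exp (Complex.I * (α : ℂ) * (v (σ i) : ℂ)) :=
      fun i => (Equiv.ofFiberEquiv_map e i).symm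
    have hk : ∀ i, ∃ k : ℤ, u i = v (σ i) + 2 * π / α * k := by
      intro i
      have h2 := hσ i
      rw [Complex.exp_eq_exp_iff_exists_int] at h2
      obtain ⟨k, hk2⟩ := h2
      refine ⟨k, ?_⟩
      have h3 : (Complex.I) * ((α * u i : ℝ) : ℂ) =
          Complex.I * ((α * v (σ i) + 2 * π * k : ℝ) : ℂ) := by
        push_cast
        linear_combination hk2
      have h4 : α * u i = α * v (σ i) + 2 * π * k := by
        have h5 := mul_left_cancel₀ Complex.I_ne_zero h3
        exact_mod_cast h5
      field_simp
      linarith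
    choose kk hkk using hk
    refine ⟨σ, kk, ?_, hkk⟩
    have hvσ : ∑ i, v (σ i) = 0 := by rw [Equiv.sum_comp σ v]; exact hv
    have hsum2 : (0 : ℝ) = 2 * π / α * ((∑ i, kk i : ℤ) : ℝ) := by
      have : ∑ i, u i = ∑ i, (v (σ i) + 2 * π / α * kk i) :=
        Finset.sum_congr rfl fun i _ => hkk i
      rw [hu, Finset.sum_add_distrib, hvσ, zero_add, ← Finset.mul_sum] at this
      rw [this]
      push_cast
      ring
    have hne : 2 * π / α ≠ 0 := by positivity
    have hX : ((∑ i, kk i : ℤ) : ℝ) = 0 := by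
      rcases mul_eq_zero.mp hsum2.symm with h' | h'
      · exact absurd h' hne
      · exact h'
    exact_mod_cast hX
  · rintro ⟨σ, kk, hksum, hco⟩ r hr1 hrn
    have hfg : ∀ i, Complex.exp (Complex.I * (α : ℂ) * (u i : ℂ)) =
        Complex.exp (Complex.I * (α : ℂ) * (v (σ i) : ℂ)) := by
      intro i
      rw [hco i]
      push_cast
      rw [mul_add, Complex.exp_add]
      have h6 : Complex.I * (α : ℂ) * (2 * (π : ℂ) / (α : ℂ) * (kk i : ℂ)) =
          (kk i : ℂ) * (2 * (π : ℂ) * Complex.I) := by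
        field_simp
      rw [h6, Complex.exp_int_mul_two_pi_mul_I, mul_one]
    have hst : ((univ : Finset (Fin n)).val.map
          (fun i => Complex.exp (Complex.I * (α : ℂ) * (u i : ℂ)))) =
        ((univ : Finset (Fin n)).val.map
          (fun i => Complex.exp (Complex.I * (α : ℂ) * (v i : ℂ)))) := by
      have h1 : (univ : Finset (Fin n)).map σ.toEmbedding = univ := Finset.map_univ_equiv σ
      calc ((univ : Finset (Fin n)).val.map
            (fun i => Complex.exp (Complex.I * (α : ℂ) * (u i : ℂ))))
          = ((univ : Finset (Fin n)).val.map
            (fun i => Complex.exp (Complex.I * (α : ℂ) * (v (σ i) : ℂ)))) :=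
            Multiset.map_congr rfl fun i _ => hfg i
        _ = (((univ : Finset (Fin n)).val.map σ).map
            (fun i => Complex.exp (Complex.I * (α : ℂ) * (v i : ℂ)))) := by
            rw [Multiset.map_map]; rfl
        _ = (((univ : Finset (Fin n)).map σ.toEmbedding).val.map
            (fun i => Complex.exp (Complex.I * (α : ℂ) * (v i : ℂ)))) := by
            rw [Finset.map_val]; rfl
        _ = ((univ : Finset (Fin n)).val.map
            (fun i => Complex.exp (Complex.I * (α : ℂ) * (v i : ℂ)))) := by rw [h1]
    have hrn' : r ≤ n := le_trans hrn (Nat.sub_le n 1)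
    rw [key u hu r hrn', key v hv r hrn', hst]
end
end
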